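/- Fix n, k, J with 1 ≤ k < J ≤ n. The symmetric n×n matrix M with M(k,j) = M(j,k) = 2 for k+1 ≤ j ≤ J and all other entries 0 (the r(k,J)-formation) is the CN matrix of some pure braid projection word on n strands. -/

import Mathlib

/-- Left position of a crossing letter, as an element of `Fin n`. -/
def posL (n : ℕ) (k : Fin (n - 1)) : Fin n := ⟨k.val, by have := k.isLt; omega⟩

/-- Right position of a crossing letter, as an element of `Fin n`. -/
def posR (n : ℕ) (k : Fin (n - 1)) : Fin n := ⟨k.val + 1, by have := k.isLt; omega⟩

/-- The transposition of positions induced by a crossing letter. -/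
def braidSwap (n : ℕ) (k : Fin (n - 1)) : Equiv.Perm (Fin n) :=
  Equiv.swap (posL n k) (posR n k)

/-- CN matrix of a braid projection word, scanning with position-to-strand
assignment `π`.  Each letter records one crossing between the two strand
labels currently at the involved positions (counted symmetrically). -/
def CNaux (n : ℕ) : Equiv.Perm (Fin n) → List (Fin (n - 1)) → Matrix (Fin n) (Fin n) ℕ
  | _, [] => 0
  | π, k :: w =>
      Matrix.single (π (posL n k)) (π (posR n k)) 1 +
      Matrix.single (π (posR n k)) (π (posL n k)) 1 +
      CNaux n (π * braidSwap n k) w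

/-- CN matrix of a braid projection word on `n` strands. -/
def CN (n : ℕ) (w : List (Fin (n - 1))) : Matrix (Fin n) (Fin n) ℕ := CNaux n 1 w

/-- Final position-to-strand assignment after scanning the word. -/
def finalPerm (n : ℕ) : Equiv.Perm (Fin n) → List (Fin (n - 1)) → Equiv.Perm (Fin n)
  | π, [] => π
  | π, k :: w => finalPerm n (π * braidSwap n k) w

/-- A braid projection word is pure if the induced permutation of strands
is the identity. -/
def IsPure (n : ℕ) (w : List (Fin (n - 1))) : Prop := finalPerm n 1 w = 1

/-- A zero-diagonal matrix is T0 if `i < j < k`, `M i j = 0` and `M j k = 0`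
imply `M i k = 0`. -/
def IsT0 {n : ℕ} {α : Type*} [Zero α] (M : Matrix (Fin n) (Fin n) α) : Prop :=
  ∀ i j k : Fin n, i < j → j < k → M i j = 0 → M j k = 0 → M i k = 0

def Wword (n : ℕ) : ℕ → ℕ → List (Fin (n - 1))
  | _, 0 => []
  | a, m+1 => if h : a < n - 1 then ⟨a, h⟩ :: (Wword n (a+1) m ++ [⟨a, h⟩]) else []

lemma CNaux_nil (n : ℕ) (π : Equiv.Perm (Fin n)) : CNaux n π [] = 0 := rfl
lemma CNaux_cons (n : ℕ) (π : Equiv.Perm (Fin n)) (k : Fin (n-1)) (w : List (Fin (n-1))) :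
    CNaux n π (k :: w) =
      Matrix.single (π (posL n k)) (π (posR n k)) 1 +
      Matrix.single (π (posR n k)) (π (posL n k)) 1 +
      CNaux n (π * braidSwap n k) w := rfl
lemma finalPerm_cons (n : ℕ) (π : Equiv.Perm (Fin n)) (k : Fin (n-1)) (w : List (Fin (n-1))) :
    finalPerm n π (k :: w) = finalPerm n (π * braidSwap n k) w := rfl

lemma finalPerm_append (n : ℕ) (u v : List (Fin (n-1))) : ∀ π,
    finalPerm n π (u ++ v) = finalPerm n (finalPerm n π u) v := by
  induction u with
  | nil => intro π; simp [finalPerm]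
  | cons a u ih => intro π; simp [finalPerm, ih]

lemma CNaux_append (n : ℕ) (u v : List (Fin (n-1))) : ∀ π,
    CNaux n π (u ++ v) = CNaux n π u + CNaux n (finalPerm n π u) v := by
  induction u with
  | nil => intro π; simp [CNaux, finalPerm]
  | cons a u ih => intro π; simp [CNaux, finalPerm, ih, add_assoc]

lemma key (n : ℕ) : ∀ m a : ℕ, a + m < n → ∀ π : Equiv.Perm (Fin n),
    finalPerm n π (Wword n a m) = π ∧
    ∀ i j : Fin n, CNaux n π (Wword n a m) i j =
      if ((π⁻¹ i).val = a ∧ a < (π⁻¹ j).val ∧ (π⁻¹ j).val ≤ a + m)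
        ∨ ((π⁻¹ j).val = a ∧ a < (π⁻¹ i).val ∧ (π⁻¹ i).val ≤ a + m)
      then 2 else 0 := by
  intro m
  induction m with
  | zero =>
    intro a _ π
    constructor
    · simp [Wword, finalPerm]
    · intro i j
      rw [if_neg (by omega)]
      simp [Wword, CNaux]
  | succ m ih =>
    intro a ha π
    have h : a < n - 1 := by omega
    set e : Fin (n-1) := ⟨a, h⟩ with he
    have hW : Wword n a (m+1) = e :: (Wword n (a+1) m ++ [e]) := by
      simp [Wword, h, he]
    obtain ⟨hF, hC⟩ := ih (a+1) (by omega) (π * braidSwap n e)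
    have hss : braidSwap n e * braidSwap n e = 1 := by
      simp [braidSwap]
    constructor
    · rw [hW, finalPerm_cons, finalPerm_append, hF]
      show π * braidSwap n e * braidSwap n e = π
      rw [mul_assoc, hss, mul_one]
    · intro i j
      rw [hW, CNaux_cons, CNaux_append, hF]
      have hπ' : ∀ x : Fin n, ((π * braidSwap n e)⁻¹ x) =
          Equiv.swap (posL n e) (posR n e) (π⁻¹ x) := by
        intro x
        simp [braidSwap, mul_inv_rev, Equiv.Perm.mul_apply, Equiv.swap_inv]
      have hpl : (posL n e).val = a := rfl
      have hpr : (posR n e).val = a + 1 := rfl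
      have hπ'v : ∀ x : Fin n, (((π * braidSwap n e)⁻¹ x)).val =
          if (π⁻¹ x).val = a then a+1 else if (π⁻¹ x).val = a+1 then a else (π⁻¹ x).val := by
        intro x
        rw [hπ', Equiv.swap_apply_def]
        rcases eq_or_ne (π⁻¹ x) (posL n e) with h1 | h1
        · rw [if_pos h1, h1, hpr, hpl, if_pos rfl]
        · rcases eq_or_ne (π⁻¹ x) (posR n e) with h2 | h2
          · rw [if_neg h1, if_pos h2, h2, hpl, hpr]
            split_ifs <;> omega
          · have e1 : (π⁻¹ x).val ≠ a := fun hh => h1 (Fin.ext (by rw [hh, hpl]))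
            have e2 : (π⁻¹ x).val ≠ a + 1 := fun hh => h2 (Fin.ext (by rw [hh, hpr]))
            rw [if_neg h1, if_neg h2, if_neg e1, if_neg e2]
      have happ : ∀ (p x : Fin n), (π p = x) ↔ ((π⁻¹ x) = p) := by
        intro p x
        constructor
        · rintro rfl; simp
        · rintro rfl; simp
      -- entries of CNaux of single letter
      have hsingle : CNaux n (π * braidSwap n e) [e] =
          Matrix.single (π (posR n e)) (π (posL n e)) 1 +
          Matrix.single (π (posL n e)) (π (posR n e)) 1 := by
        rw [CNaux_cons, CNaux_nil, add_zero]
        have h1 : (π * braidSwap n e) (posL n e) = π (posR n e) := by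
          simp [braidSwap, Equiv.Perm.mul_apply]
        have h2 : (π * braidSwap n e) (posR n e) = π (posL n e) := by
          simp [braidSwap, Equiv.Perm.mul_apply]
        rw [h1, h2]
      rw [hsingle]
      simp only [Matrix.add_apply, hC i j]
      have hstd : ∀ p q : Fin n, Matrix.single (π p) (π q) (1:ℕ) i j =
          if (π⁻¹ i) = p ∧ (π⁻¹ j) = q then 1 else 0 := by
        intro p q
        simp only [Matrix.single, Matrix.of_apply, happ]
      rw [hstd, hstd, hπ'v i, hπ'v j]
      have hi : ((π⁻¹ i) = posL n e ↔ (π⁻¹ i).val = a) := by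
        rw [Fin.ext_iff, hpl]
      have hi' : ((π⁻¹ i) = posR n e ↔ (π⁻¹ i).val = a+1) := by
        rw [Fin.ext_iff, hpr]
      have hj : ((π⁻¹ j) = posL n e ↔ (π⁻¹ j).val = a) := by
        rw [Fin.ext_iff, hpl]
      have hj' : ((π⁻¹ j) = posR n e ↔ (π⁻¹ j).val = a+1) := by
        rw [Fin.ext_iff, hpr]
      simp only [hi, hi', hj, hj']
      split_ifs <;> omega

theorem stmt8 (n k J : ℕ) (hk : 1 ≤ k) (hkJ : k < J) (hJ : J ≤ n) :
    ∃ w : List (Fin (n - 1)), IsPure n w ∧ ∀ i j : Fin n,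
      CN n w i j =
        if (i.val + 1 = k ∧ k + 1 ≤ j.val + 1 ∧ j.val + 1 ≤ J) ∨
           (j.val + 1 = k ∧ k + 1 ≤ i.val + 1 ∧ i.val + 1 ≤ J) then 2 else 0 := by
  obtain ⟨hF, hC⟩ := key n (J - k) (k - 1) (by omega) 1
  refine ⟨Wword n (k-1) (J-k), hF, ?_⟩
  intro i j
  rw [CN, hC i j]
  have h1 : ((1 : Equiv.Perm (Fin n))⁻¹ i) = i := rfl
  have h2 : ((1 : Equiv.Perm (Fin n))⁻¹ j) = j := rfl
  rw [h1, h2]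
  have hi := i.isLt
  have hj := j.isLt
  congr 1
  simp only [eq_iff_iff]
  omega
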